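/- In any zero-error SPIR scheme, for every message index k ∈ {1,…,K} and every database index n ∈ {1,…,N}, the conditional entropy of the answer given the query is at most the entropy of the common randomness: H(A_n^{[k]} | Q_n^{[k]}) ≤ H(S). -/

import Mathlib

open Finset

attribute [local instance] Classical.propDecidable

/-- Probability that the random variable `X` takes the value `a`, on a finite
sample space `Ω` with probability mass function `p`. -/
noncomputable def prob {Ω α : Type*} [Fintype Ω] (p : Ω → ℝ) (X : Ω → α) (a : α) : ℝ :=
  ∑ ω : Ω, if X ω = a then p ω else 0

/-- Shannon entropy (in bits) of the random variable `X`. -/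
noncomputable def ent {Ω α : Type*} [Fintype Ω] [Fintype α] (p : Ω → ℝ) (X : Ω → α) : ℝ :=
  - ∑ a : α, prob p X a * Real.logb 2 (prob p X a)

/-- Conditional Shannon entropy (in bits) `H(X | Y)`. -/
noncomputable def condEnt {Ω α β : Type*} [Fintype Ω] [Fintype α] [Fintype β]
    (p : Ω → ℝ) (X : Ω → α) (Y : Ω → β) : ℝ :=
  ent p (fun ω => (X ω, Y ω)) - ent p Y

/-- Shannon mutual information (in bits) `I(X ; Y)`. -/
noncomputable def mutInfo {Ω α β : Type*} [Fintype Ω] [Fintype α] [Fintype β]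
    (p : Ω → ℝ) (X : Ω → α) (Y : Ω → β) : ℝ :=
  ent p X + ent p Y - ent p (fun ω => (X ω, Y ω))

/-- `X` and `Y` are identically distributed. -/
def IdentDist {Ω α : Type*} [Fintype Ω] (p : Ω → ℝ) (X Y : Ω → α) : Prop :=
  ∀ a : α, prob p X a = prob p Y a

/-- `X` is uniformly distributed on `α`. -/
def Unif {Ω α : Type*} [Fintype Ω] [Fintype α] (p : Ω → ℝ) (X : Ω → α) : Prop :=
  ∀ a : α, prob p X a = 1 / (Fintype.card α : ℝ)

section EntropyLib
variable {Ω : Type*} [Fintype Ω] {p : Ω → ℝ}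

lemma prob_nonneg (hp0 : ∀ ω, 0 ≤ p ω) {α : Type*} (X : Ω → α) (a : α) :
    0 ≤ prob p X a := by
  apply Finset.sum_nonneg; intro ω _; split; exacts [hp0 ω, le_refl 0]

lemma prob_mono (hp0 : ∀ ω, 0 ≤ p ω) {α β : Type*} {X : Ω → α} {Y : Ω → β} {a : α} {b : β}
    (h : ∀ ω, X ω = a → Y ω = b) : prob p X a ≤ prob p Y b := by
  apply Finset.sum_le_sum; intro ω _
  by_cases hx : X ω = a
  · rw [if_pos hx, if_pos (h ω hx)]
  · rw [if_neg hx]; split; exacts [hp0 ω, le_refl 0]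

lemma le_prob (hp0 : ∀ ω, 0 ≤ p ω) {α : Type*} (X : Ω → α) (ω : Ω) :
    p ω ≤ prob p X (X ω) := by
  have := Finset.single_le_sum (f := fun ω' => if X ω' = X ω then p ω' else 0)
    (fun ω' _ => by split; exacts [hp0 ω', le_refl 0]) (Finset.mem_univ ω)
  simpa [prob] using this

lemma sum_prob_eq_one (hp1 : ∑ ω : Ω, p ω = 1) {α : Type*} [Fintype α] (X : Ω → α) :
    ∑ a : α, prob p X a = 1 := by
  unfold prob
  rw [Finset.sum_comm, ← hp1]
  exact Finset.sum_congr rfl fun ω _ => by simp [Finset.sum_ite_eq]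

lemma sum_prob_weight {α : Type*} [Fintype α] (X : Ω → α) (h : α → ℝ) :
    ∑ ω, p ω * h (X ω) = ∑ a, prob p X a * h a := by
  unfold prob
  rw [eq_comm]
  calc ∑ a, (∑ ω, if X ω = a then p ω else 0) * h a
      = ∑ a, ∑ ω, (if X ω = a then p ω else 0) * h a := by
        refine Finset.sum_congr rfl fun a _ => Finset.sum_mul ..
    _ = ∑ ω, ∑ a, (if X ω = a then p ω else 0) * h a := Finset.sum_comm
    _ = ∑ ω, p ω * h (X ω) := by
        refine Finset.sum_congr rfl fun ω _ => ?_
        simp [ite_mul, Finset.sum_ite_eq]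

lemma ent_pointwise {α : Type*} [Fintype α] (X : Ω → α) :
    ent p X = - ∑ ω, p ω * Real.logb 2 (prob p X (X ω)) := by
  unfold ent
  rw [sum_prob_weight X (fun a => Real.logb 2 (prob p X a))]

lemma ent_congr {α β : Type*} [Fintype α] [Fintype β] {X : Ω → α} {Y : Ω → β}
    (h : ∀ ω ω', X ω = X ω' ↔ Y ω = Y ω') : ent p X = ent p Y := by
  rw [ent_pointwise, ent_pointwise]
  congr 1
  refine Finset.sum_congr rfl fun ω _ => ?_
  have hprob : prob p X (X ω) = prob p Y (Y ω) := by
    unfold prob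
    refine Finset.sum_congr rfl fun ω' _ => ?_
    by_cases hx : X ω' = X ω
    · rw [if_pos hx, if_pos ((h ω' ω).1 hx)]
    · rw [if_neg hx, if_neg (fun hy => hx ((h ω' ω).2 hy))]
  rw [hprob]

lemma ent_identDist {α : Type*} [Fintype α] {X Y : Ω → α} (h : IdentDist p X Y) :
    ent p X = ent p Y := by
  unfold ent
  congr 1
  exact Finset.sum_congr rfl fun a _ => by rw [h a]

lemma prob_map {α β : Type*} [Fintype α] (X : Ω → α) (f : α → β) (b : β) :
    prob p (fun ω => f (X ω)) b = ∑ a : α, if f a = b then prob p X a else 0 := by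
  unfold prob
  rw [eq_comm]
  calc ∑ a : α, (if f a = b then ∑ ω : Ω, if X ω = a then p ω else 0 else 0)
      = ∑ a : α, ∑ ω : Ω, (if f a = b then (if X ω = a then p ω else 0) else 0) := by
        refine Finset.sum_congr rfl fun a _ => ?_
        split
        · rfl
        · simp
    _ = ∑ ω : Ω, ∑ a : α, (if f a = b then (if X ω = a then p ω else 0) else 0) :=
        Finset.sum_comm
    _ = ∑ ω : Ω, (if f (X ω) = b then p ω else 0) := by
        refine Finset.sum_congr rfl fun ω _ => ?_
        have hterm : ∀ a : α, (if f a = b then (if X ω = a then p ω else 0) else 0)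
            = if X ω = a then (if f (X ω) = b then p ω else 0) else 0 := by
          intro a
          by_cases hxa : X ω = a
          · rw [← hxa]; simp
          · simp [hxa]
        rw [Finset.sum_congr rfl fun a _ => hterm a]
        simp [Finset.sum_ite_eq]

lemma identDist_comp {α β : Type*} [Fintype α] {X Y : Ω → α} (h : IdentDist p X Y)
    (f : α → β) : IdentDist p (fun ω => f (X ω)) (fun ω => f (Y ω)) := by
  intro b
  rw [prob_map, prob_map]
  exact Finset.sum_congr rfl fun a _ => by rw [h a]

lemma ent_le_ent_of_map (hp0 : ∀ ω, 0 ≤ p ω) {α β : Type*} [Fintype α] [Fintype β]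
    {X : Ω → α} {Y : Ω → β} (f : α → β) (h : ∀ ω, Y ω = f (X ω)) :
    ent p Y ≤ ent p X := by
  rw [ent_pointwise, ent_pointwise, neg_le_neg_iff]
  refine Finset.sum_le_sum fun ω _ => ?_
  rcases eq_or_lt_of_le (hp0 ω) with hp | hp
  · rw [← hp]; simp
  · refine mul_le_mul_of_nonneg_left ?_ (le_of_lt hp)
    have h1 : 0 < prob p X (X ω) := lt_of_lt_of_le hp (le_prob hp0 X ω)
    have h2 : prob p X (X ω) ≤ prob p Y (Y ω) :=
      prob_mono hp0 (fun ω' hx => by rw [h ω', hx, ← h ω])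
    exact Real.logb_le_logb_of_le (by norm_num) h1 h2

lemma gibbs {ι : Type*} [Fintype ι] (f g : ι → ℝ) (hf : ∀ i, 0 ≤ f i) (hg : ∀ i, 0 ≤ g i)
    (hfg : ∀ i, 0 < f i → 0 < g i) (hsum : ∑ i, g i ≤ ∑ i, f i) :
    ∑ i, f i * Real.logb 2 (g i) ≤ ∑ i, f i * Real.logb 2 (f i) := by
  have hlog2 : 0 < Real.log 2 := Real.log_pos (by norm_num)
  have hterm : ∀ i, f i * Real.logb 2 (g i) - f i * Real.logb 2 (f i)
      ≤ (g i - f i) / Real.log 2 := by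
    intro i
    rcases eq_or_lt_of_le (hf i) with h0 | h0
    · rw [← h0]
      norm_num
      exact div_nonneg (hg i) hlog2.le
    · have hgi := hfg i h0
      rw [← mul_sub]
      have hlogb : Real.logb 2 (g i) - Real.logb 2 (f i)
          = Real.log (g i / f i) / Real.log 2 := by
        rw [← Real.logb_div (ne_of_gt hgi) (ne_of_gt h0)]
        rfl
      rw [hlogb]
      have hle : Real.log (g i / f i) ≤ g i / f i - 1 :=
        Real.log_le_sub_one_of_pos (div_pos hgi h0)
      calc f i * (Real.log (g i / f i) / Real.log 2)
          ≤ f i * ((g i / f i - 1) / Real.log 2) := by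
            apply mul_le_mul_of_nonneg_left _ h0.le
            gcongr
        _ = (g i - f i) / Real.log 2 := by
            field_simp
  have h1 : ∑ i, (f i * Real.logb 2 (g i) - f i * Real.logb 2 (f i))
      ≤ ∑ i, (g i - f i) / Real.log 2 := Finset.sum_le_sum fun i _ => hterm i
  rw [Finset.sum_sub_distrib] at h1
  have h2 : ∑ i, (g i - f i) / Real.log 2 = (∑ i, g i - ∑ i, f i) / Real.log 2 := by
    rw [← Finset.sum_div, Finset.sum_sub_distrib]
  have h3 : (∑ i, g i - ∑ i, f i) / Real.log 2 ≤ 0 :=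
    div_nonpos_of_nonpos_of_nonneg (by linarith) hlog2.le
  linarith

lemma sum_rot3 {α β γ M : Type*} [AddCommMonoid M] [Fintype α] [Fintype β] [Fintype γ]
    (f : α → β → γ → M) :
    ∑ x, ∑ y, ∑ z, f x y z = ∑ z, ∑ x, ∑ y, f x y z := by
  calc ∑ x, ∑ y, ∑ z, f x y z
      = ∑ x, ∑ z, ∑ y, f x y z := Finset.sum_congr rfl fun x _ => Finset.sum_comm
    _ = ∑ z, ∑ x, ∑ y, f x y z := Finset.sum_comm

lemma sum_rot3' {α β γ M : Type*} [AddCommMonoid M] [Fintype α] [Fintype β] [Fintype γ]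
    (f : α → β → γ → M) :
    ∑ x, ∑ y, ∑ z, f x y z = ∑ y, ∑ z, ∑ x, f x y z := by
  calc ∑ x, ∑ y, ∑ z, f x y z
      = ∑ y, ∑ x, ∑ z, f x y z := Finset.sum_comm
    _ = ∑ y, ∑ z, ∑ x, f x y z := Finset.sum_congr rfl fun y _ => Finset.sum_comm

lemma submod (hp0 : ∀ ω, 0 ≤ p ω) (hp1 : ∑ ω : Ω, p ω = 1)
    {α β γ : Type*} [Fintype α] [Fintype β] [Fintype γ]
    (X : Ω → α) (Y : Ω → β) (Z : Ω → γ) :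
    ent p (fun ω => (X ω, Y ω, Z ω)) + ent p Z
      ≤ ent p (fun ω => (X ω, Z ω)) + ent p (fun ω => (Y ω, Z ω)) := by
  set r : α × β × γ → ℝ := prob p (fun ω => (X ω, Y ω, Z ω)) with hr
  set u : α × γ → ℝ := prob p (fun ω => (X ω, Z ω)) with hu
  set v : β × γ → ℝ := prob p (fun ω => (Y ω, Z ω)) with hv
  set t : γ → ℝ := prob p Z with ht
  -- marginals
  have hm1 : ∀ x z, ∑ y, r (x, y, z) = u (x, z) := by
    intro x z
    rw [hr, hu]
    unfold prob
    rw [Finset.sum_comm]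
    refine Finset.sum_congr rfl fun ω _ => ?_
    simp only [Prod.mk.injEq]
    by_cases hxz : X ω = x ∧ Z ω = z
    · simp [hxz.1, hxz.2, Finset.sum_ite_eq]
    · rw [if_neg hxz]
      refine Finset.sum_eq_zero fun y _ => if_neg (by tauto)
  have hm2 : ∀ y z, ∑ x, r (x, y, z) = v (y, z) := by
    intro y z
    rw [hr, hv]
    unfold prob
    rw [Finset.sum_comm]
    refine Finset.sum_congr rfl fun ω _ => ?_
    simp only [Prod.mk.injEq]
    by_cases hyz : Y ω = y ∧ Z ω = z
    · simp [hyz.1, hyz.2, Finset.sum_ite_eq]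
    · rw [if_neg hyz]
      refine Finset.sum_eq_zero fun x _ => if_neg (by tauto)
  have hm3 : ∀ z, ∑ x, u (x, z) = t z := by
    intro z
    rw [hu, ht]
    unfold prob
    rw [Finset.sum_comm]
    refine Finset.sum_congr rfl fun ω _ => ?_
    simp only [Prod.mk.injEq]
    by_cases hz : Z ω = z
    · simp [hz, Finset.sum_ite_eq]
    · rw [if_neg hz]
      refine Finset.sum_eq_zero fun x _ => if_neg (by tauto)
  have hm4 : ∀ z, ∑ y, v (y, z) = t z := by
    intro z
    rw [hv, ht]
    unfold prob
    rw [Finset.sum_comm]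
    refine Finset.sum_congr rfl fun ω _ => ?_
    simp only [Prod.mk.injEq]
    by_cases hz : Z ω = z
    · simp [hz, Finset.sum_ite_eq]
    · rw [if_neg hz]
      refine Finset.sum_eq_zero fun y _ => if_neg (by tauto)
  -- nonnegativity and domination
  have hrn : ∀ w, 0 ≤ r w := fun w => by rw [hr]; exact prob_nonneg hp0 _ _
  have hun : ∀ q, 0 ≤ u q := fun q => by rw [hu]; exact prob_nonneg hp0 _ _
  have hvn : ∀ s, 0 ≤ v s := fun s => by rw [hv]; exact prob_nonneg hp0 _ _
  have htn : ∀ z, 0 ≤ t z := fun z => by rw [ht]; exact prob_nonneg hp0 _ _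
  have hru : ∀ w : α × β × γ, r w ≤ u (w.1, w.2.2) := by
    intro w
    rw [hr, hu]
    exact prob_mono hp0 fun ω h => by
      rw [Prod.ext_iff, Prod.ext_iff] at h
      exact Prod.ext h.1 h.2.2
  have hrv : ∀ w : α × β × γ, r w ≤ v (w.2.1, w.2.2) := by
    intro w
    rw [hr, hv]
    exact prob_mono hp0 fun ω h => by
      rw [Prod.ext_iff, Prod.ext_iff] at h
      exact Prod.ext h.2.1 h.2.2
  have hrt : ∀ w : α × β × γ, r w ≤ t w.2.2 := by
    intro w
    rw [hr, ht]
    exact prob_mono hp0 fun ω h => by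
      rw [Prod.ext_iff, Prod.ext_iff] at h
      exact h.2.2
  have hr1 : ∑ w : α × β × γ, r w = 1 := by rw [hr]; exact sum_prob_eq_one hp1 _
  have ht1 : ∑ z, t z = 1 := by rw [ht]; exact sum_prob_eq_one hp1 _
  -- the comparison function
  set g : α × β × γ → ℝ :=
    fun w => if t w.2.2 = 0 then 0 else u (w.1, w.2.2) * v (w.2.1, w.2.2) / t w.2.2 with hg
  have hgn : ∀ w, 0 ≤ g w := by
    intro w
    rw [hg]
    dsimp only
    split
    · exact le_refl 0
    · exact div_nonneg (mul_nonneg (hun _) (hvn _)) (htn _)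
  have hfg : ∀ w, 0 < r w → 0 < g w := by
    intro w hw
    have htw : 0 < t w.2.2 := lt_of_lt_of_le hw (hrt w)
    rw [hg]
    dsimp only
    rw [if_neg (ne_of_gt htw)]
    exact div_pos (mul_pos (lt_of_lt_of_le hw (hru w)) (lt_of_lt_of_le hw (hrv w))) htw
  have hgsum : ∑ w : α × β × γ, g w ≤ 1 := by
    have expand : ∑ w : α × β × γ, g w
        = ∑ z, ∑ x, ∑ y, (if t z = 0 then 0 else u (x, z) * v (y, z) / t z) := by
      simp only [Fintype.sum_prod_type, hg]
      exact sum_rot3 _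
    rw [expand, ← ht1]
    refine Finset.sum_le_sum fun z _ => ?_
    by_cases htz : t z = 0
    · simpa [htz] using htn z
    · refine le_of_eq ?_
      calc ∑ x, ∑ y, (if t z = 0 then 0 else u (x, z) * v (y, z) / t z)
          = ∑ x, ∑ y, u (x, z) * v (y, z) / t z := by simp only [if_neg htz]
        _ = ∑ x, u (x, z) := by
            refine Finset.sum_congr rfl fun x _ => ?_
            rw [← Finset.sum_div, ← Finset.mul_sum, hm4, mul_div_assoc, div_self htz, mul_one]
        _ = t z := hm3 z
  -- Gibbs
  have hkey : ∑ w : α × β × γ, r w * Real.logb 2 (g w)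
      ≤ ∑ w : α × β × γ, r w * Real.logb 2 (r w) :=
    gibbs r g hrn hgn hfg (by rw [hr1]; exact hgsum)
  have hterm : ∀ w : α × β × γ, r w * Real.logb 2 (g w)
      = r w * (Real.logb 2 (u (w.1, w.2.2)) + Real.logb 2 (v (w.2.1, w.2.2))
          - Real.logb 2 (t w.2.2)) := by
    intro w
    by_cases hrw : r w = 0
    · simp [hrw]
    · have hw0 : 0 < r w := lt_of_le_of_ne (hrn w) (Ne.symm hrw)
      have hu0 : 0 < u (w.1, w.2.2) := lt_of_lt_of_le hw0 (hru w)
      have hv0 : 0 < v (w.2.1, w.2.2) := lt_of_lt_of_le hw0 (hrv w)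
      have ht0 : 0 < t w.2.2 := lt_of_lt_of_le hw0 (hrt w)
      have hgw : g w = u (w.1, w.2.2) * v (w.2.1, w.2.2) / t w.2.2 := by
        rw [hg]
        exact if_neg (ne_of_gt ht0)
      rw [hgw, Real.logb_div (ne_of_gt (mul_pos hu0 hv0)) (ne_of_gt ht0),
        Real.logb_mul (ne_of_gt hu0) (ne_of_gt hv0)]
  rw [Finset.sum_congr rfl fun w _ => hterm w] at hkey
  -- express the four entropies as value sums
  have g1 : ent p (fun ω => (X ω, Y ω, Z ω)) = - ∑ w : α × β × γ, r w * Real.logb 2 (r w) := by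
    rw [hr]; rfl
  have g2 : ent p Z = - ∑ z, t z * Real.logb 2 (t z) := by rw [ht]; rfl
  have g3 : ent p (fun ω => (X ω, Z ω)) = - ∑ q : α × γ, u q * Real.logb 2 (u q) := by
    rw [hu]; rfl
  have g4 : ent p (fun ω => (Y ω, Z ω)) = - ∑ s : β × γ, v s * Real.logb 2 (v s) := by
    rw [hv]; rfl
  -- marginal re-expressions
  have eu : ∑ q : α × γ, u q * Real.logb 2 (u q)
      = ∑ w : α × β × γ, r w * Real.logb 2 (u (w.1, w.2.2)) := by
    simp only [Fintype.sum_prod_type]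
    refine Eq.symm ?_
    calc ∑ x, ∑ y, ∑ z, r (x, y, z) * Real.logb 2 (u (x, z))
        = ∑ x, ∑ z, ∑ y, r (x, y, z) * Real.logb 2 (u (x, z)) :=
          Finset.sum_congr rfl fun x _ => Finset.sum_comm
      _ = ∑ x, ∑ z, u (x, z) * Real.logb 2 (u (x, z)) :=
          Finset.sum_congr rfl fun x _ => Finset.sum_congr rfl fun z _ => by
            rw [← Finset.sum_mul, hm1]
  have ev : ∑ s : β × γ, v s * Real.logb 2 (v s)
      = ∑ w : α × β × γ, r w * Real.logb 2 (v (w.2.1, w.2.2)) := by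
    simp only [Fintype.sum_prod_type]
    refine Eq.symm ?_
    calc ∑ x, ∑ y, ∑ z, r (x, y, z) * Real.logb 2 (v (y, z))
        = ∑ y, ∑ z, ∑ x, r (x, y, z) * Real.logb 2 (v (y, z)) := sum_rot3' _
      _ = ∑ y, ∑ z, v (y, z) * Real.logb 2 (v (y, z)) :=
          Finset.sum_congr rfl fun y _ => Finset.sum_congr rfl fun z _ => by
            rw [← Finset.sum_mul, hm2]
  have et : ∑ z, t z * Real.logb 2 (t z)
      = ∑ w : α × β × γ, r w * Real.logb 2 (t w.2.2) := by
    simp only [Fintype.sum_prod_type]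
    refine Eq.symm ?_
    calc ∑ x, ∑ y, ∑ z, r (x, y, z) * Real.logb 2 (t z)
        = ∑ z, ∑ x, ∑ y, r (x, y, z) * Real.logb 2 (t z) := sum_rot3 _
      _ = ∑ z, t z * Real.logb 2 (t z) := by
          refine Finset.sum_congr rfl fun z _ => ?_
          calc ∑ x, ∑ y, r (x, y, z) * Real.logb 2 (t z)
              = ∑ x, u (x, z) * Real.logb 2 (t z) :=
                Finset.sum_congr rfl fun x _ => by rw [← Finset.sum_mul, hm1]
            _ = (∑ x, u (x, z)) * Real.logb 2 (t z) := (Finset.sum_mul ..).symm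
            _ = t z * Real.logb 2 (t z) := by rw [hm3]
  rw [g1, g2, g3, g4, eu, ev, et]
  simp only [mul_sub, mul_add, Finset.sum_sub_distrib, Finset.sum_add_distrib] at hkey
  linarith

lemma mi_nonneg (hp0 : ∀ ω, 0 ≤ p ω) (hp1 : ∑ ω : Ω, p ω = 1)
    {α β : Type*} [Fintype α] [Fintype β] (X : Ω → α) (Y : Ω → β) :
    ent p (fun ω => (X ω, Y ω)) ≤ ent p X + ent p Y := by
  have hs := submod hp0 hp1 X Y (fun _ : Ω => ())
  have hzero : ent p (fun _ : Ω => ()) = 0 := by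
    unfold ent prob
    simp [hp1]
  have e1 : ent p (fun ω => (X ω, Y ω, ())) = ent p (fun ω => (X ω, Y ω)) :=
    ent_congr (by intro ω ω'; simp [Prod.ext_iff])
  have e2 : ent p (fun ω => (X ω, ())) = ent p X :=
    ent_congr (by intro ω ω'; simp [Prod.ext_iff])
  have e3 : ent p (fun ω => (Y ω, ())) = ent p Y :=
    ent_congr (by intro ω ω'; simp [Prod.ext_iff])
  rw [e1, hzero, e2, e3] at hs
  linarith

lemma spir_key (hp0 : ∀ ω, 0 ≤ p ω) (hp1 : ∑ ω : Ω, p ω = 1)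
    {𝒳 𝒞 𝒰 𝒯 𝒢 𝒢' : Type*} [Fintype 𝒳] [Fintype 𝒞] [Fintype 𝒰] [Fintype 𝒯]
    [Fintype 𝒢] [Fintype 𝒢']
    (X : Ω → 𝒳) (C : Ω → 𝒞) (U : Ω → 𝒰) (T T' : Ω → 𝒯) (GK : Ω → 𝒢) (G : Ω → 𝒢')
    (hTGK : ∃ h : 𝒢 → 𝒯, ∀ ω, T ω = h (GK ω))
    (hT'G : ∃ h : 𝒢' → 𝒯, ∀ ω, T' ω = h (G ω))
    (hCG : ∃ h : 𝒢' → 𝒞, ∀ ω, C ω = h (G ω))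
    (hswap3 : ent p (fun ω => (C ω, U ω, T ω)) = ent p (fun ω => (C ω, U ω, T' ω)))
    (hswap4 : ent p (fun ω => (X ω, C ω, U ω, T ω))
      = ent p (fun ω => (X ω, C ω, U ω, T' ω)))
    (hDBk : ent p (fun ω => (C ω, U ω)) + ent p GK
      - ent p (fun ω => (C ω, U ω, GK ω)) = 0)
    (hDBk' : ent p (fun ω => (X ω, U ω)) + ent p G
      - ent p (fun ω => (X ω, U ω, G ω)) = 0) :
    ent p (fun ω => (X ω, C ω, U ω)) + ent p T
      - ent p (fun ω => (X ω, C ω, U ω, T ω)) ≤ 0 := by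
  obtain ⟨hgk, hTGKe⟩ := hTGK
  obtain ⟨hg', hT'Ge⟩ := hT'G
  obtain ⟨hc, hCGe⟩ := hCG
  -- Term 1 : I(C,U ; T) ≤ I(C,U ; GK) = 0
  have S1 := submod hp0 hp1 (fun ω => (C ω, U ω)) GK T
  have r1 : ent p (fun ω => ((C ω, U ω), GK ω, T ω))
      = ent p (fun ω => (C ω, U ω, GK ω)) := by
    refine ent_congr ?_
    intro ω ω'
    simp only [Prod.mk.injEq]
    constructor
    · rintro ⟨⟨h1, h2⟩, h3, _⟩; exact ⟨h1, h2, h3⟩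
    · rintro ⟨h1, h2, h3⟩; exact ⟨⟨h1, h2⟩, h3, by rw [hTGKe, hTGKe, h3]⟩
  have r2 : ent p (fun ω => ((C ω, U ω), T ω))
      = ent p (fun ω => (C ω, U ω, T ω)) := by
    refine ent_congr ?_
    intro ω ω'
    simp only [Prod.mk.injEq]
    tauto
  have r3 : ent p (fun ω => (GK ω, T ω)) = ent p GK := by
    refine ent_congr ?_
    intro ω ω'
    simp only [Prod.mk.injEq]
    constructor
    · rintro ⟨h1, _⟩; exact h1
    · intro h1; exact ⟨h1, by rw [hTGKe, hTGKe, h1]⟩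
  rw [r1, r2, r3] at S1
  -- Term 2 submodularity (conditional data processing)
  have S2 := submod hp0 hp1 X G (fun ω => (C ω, U ω, T' ω))
  have r4 : ent p (fun ω => (X ω, G ω, C ω, U ω, T' ω))
      = ent p (fun ω => (X ω, C ω, U ω, G ω)) := by
    refine ent_congr ?_
    intro ω ω'
    simp only [Prod.mk.injEq]
    constructor
    · rintro ⟨h1, h2, h3, h4, _⟩; exact ⟨h1, h3, h4, h2⟩
    · rintro ⟨h1, h3, h4, h2⟩
      exact ⟨h1, h2, h3, h4, by rw [hT'Ge, hT'Ge, h2]⟩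
  have r5 : ent p (fun ω => (G ω, C ω, U ω, T' ω))
      = ent p (fun ω => (C ω, U ω, G ω)) := by
    refine ent_congr ?_
    intro ω ω'
    simp only [Prod.mk.injEq]
    constructor
    · rintro ⟨h1, h2, h3, _⟩; exact ⟨h2, h3, h1⟩
    · rintro ⟨h2, h3, h1⟩
      exact ⟨h1, h2, h3, by rw [hT'Ge, hT'Ge, h1]⟩
  rw [r4, r5] at S2
  -- I(X ; C | U) ≥ 0
  have S3 := submod hp0 hp1 X C U
  -- absorb C into G
  have r6 : ent p (fun ω => (C ω, U ω, G ω)) = ent p (fun ω => (U ω, G ω)) := by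
    refine ent_congr ?_
    intro ω ω'
    simp only [Prod.mk.injEq]
    constructor
    · rintro ⟨_, h2, h3⟩; exact ⟨h2, h3⟩
    · rintro ⟨h2, h3⟩; exact ⟨by rw [hCGe, hCGe, h3], h2, h3⟩
  have r7 : ent p (fun ω => (X ω, C ω, U ω, G ω))
      = ent p (fun ω => (X ω, U ω, G ω)) := by
    refine ent_congr ?_
    intro ω ω'
    simp only [Prod.mk.injEq]
    constructor
    · rintro ⟨h1, _, h3, h4⟩; exact ⟨h1, h3, h4⟩
    · rintro ⟨h1, h3, h4⟩; exact ⟨h1, by rw [hCGe, hCGe, h4], h3, h4⟩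
  have S4 := mi_nonneg hp0 hp1 U G
  linarith [S1, S2, S3, S4, hDBk, hDBk', hswap3, hswap4, r6, r7]

end EntropyLib
theorem spir_answer_entropy_le_common_randomness
    (K N L : ℕ) (hK : 2 ≤ K) (hN : 2 ≤ N) (hL : 1 ≤ L)
    (Ω : Type*) [Fintype Ω]
    (p : Ω → ℝ) (hp0 : ∀ ω, 0 ≤ p ω) (hp1 : ∑ ω : Ω, p ω = 1)
    (𝓢 𝓕 : Type*) [Fintype 𝓢] [Fintype 𝓕]
    (𝓠 𝓐 : Fin N → Type*) [∀ n, Fintype (𝓠 n)] [∀ n, Fintype (𝓐 n)]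
    (W : Fin K → Ω → (Fin L → ZMod 2)) (S : Ω → 𝓢) (F : Ω → 𝓕)
    (Q : ∀ (_ : Fin K) (n : Fin N), Ω → 𝓠 n) (A : ∀ (_ : Fin K) (n : Fin N), Ω → 𝓐 n)
    -- each message is uniformly distributed on the set of `L`-bit strings
    (hWunif : ∀ k, Unif p (W k))
    -- the messages, the common randomness `S` and the user randomness `F`
    -- are mutually independent
    (hIndep : ∀ (w : ∀ _ : Fin K, Fin L → ZMod 2) (s : 𝓢) (f : 𝓕),
      prob p (fun ω => ((fun k => W k ω), S ω, F ω)) (w, s, f)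
        = (∏ k, prob p (W k) (w k)) * prob p S s * prob p F f)
    -- each query is a deterministic function of `F`
    (hQ : ∀ k n, ∃ g : 𝓕 → 𝓠 n, ∀ ω, Q k n ω = g (F ω))
    -- each answer is a deterministic function of the query, the messages and `S`
    (hA : ∀ k n, ∃ g : 𝓠 n → (∀ _ : Fin K, Fin L → ZMod 2) → 𝓢 → 𝓐 n,
      ∀ ω, A k n ω = g (Q k n ω) (fun j => W j ω) (S ω))
    -- correctness: `W_k` is decodable from the answers and `F`
    (hCorrect : ∀ k, ∃ g : (∀ n, 𝓐 n) → 𝓕 → (Fin L → ZMod 2),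
      ∀ ω, W k ω = g (fun n => A k n ω) (F ω))
    -- user-privacy
    (hUserPriv : ∀ (n : Fin N) (k k' : Fin K),
      IdentDist p (fun ω => (Q k n ω, A k n ω, (fun j => W j ω), S ω))
                  (fun ω => (Q k' n ω, A k' n ω, (fun j => W j ω), S ω)))
    -- database-privacy
    (hDBPriv : ∀ k : Fin K,
      mutInfo p (fun ω => (fun j : {j : Fin K // j ≠ k} => W j.1 ω))
        (fun ω => ((fun n => Q k n ω), (fun n => A k n ω), F ω)) = 0) :
    ∀ (k : Fin K) (n : Fin N), condEnt p (A k n) (Q k n) ≤ ent p S := by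
  intro k n
  -- choose a second message index
  obtain ⟨k', hk'⟩ : ∃ k' : Fin K, k' ≠ k := by
    refine ⟨if k = ⟨0, by omega⟩ then ⟨1, by omega⟩ else ⟨0, by omega⟩, ?_⟩
    split <;> rename_i hsplit <;> simp_all [Fin.ext_iff] <;> omega
  -- splitting the full message tuple
  have ewfiff : ∀ ω ω' : Ω, (fun j : Fin K => W j ω) = (fun j : Fin K => W j ω')
      ↔ (W k ω = W k ω' ∧ W k' ω = W k' ω' ∧
        (fun j : {j : Fin K // j ≠ k ∧ j ≠ k'} => W j.1 ω)
          = (fun j : {j : Fin K // j ≠ k ∧ j ≠ k'} => W j.1 ω')) := by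
    intro ω ω'
    constructor
    · intro h
      exact ⟨congrFun h k, congrFun h k', funext fun j => congrFun h j.1⟩
    · rintro ⟨h1, h2, h3⟩
      funext j
      by_cases hjk : j = k
      · rw [hjk]; exact h1
      · by_cases hjk' : j = k'
        · rw [hjk']; exact h2
        · exact congrFun h3 ⟨j, hjk, hjk'⟩
  have ebar : ∀ ω ω' : Ω,
      (fun j : {j : Fin K // j ≠ k} => W j.1 ω) = (fun j : {j : Fin K // j ≠ k} => W j.1 ω')
      ↔ (W k' ω = W k' ω' ∧
        (fun j : {j : Fin K // j ≠ k ∧ j ≠ k'} => W j.1 ω)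
          = (fun j : {j : Fin K // j ≠ k ∧ j ≠ k'} => W j.1 ω')) := by
    intro ω ω'
    constructor
    · intro h
      exact ⟨congrFun h ⟨k', hk'⟩, funext fun j => congrFun h ⟨j.1, j.2.1⟩⟩
    · rintro ⟨h1, h2⟩
      funext j
      by_cases hj : j.1 = k'
      · show W j.1 ω = W j.1 ω'
        rw [hj]; exact h1
      · exact congrFun h2 ⟨j.1, j.2, hj⟩
  have ebar' : ∀ ω ω' : Ω,
      (fun j : {j : Fin K // j ≠ k'} => W j.1 ω) = (fun j : {j : Fin K // j ≠ k'} => W j.1 ω')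
      ↔ (W k ω = W k ω' ∧
        (fun j : {j : Fin K // j ≠ k ∧ j ≠ k'} => W j.1 ω)
          = (fun j : {j : Fin K // j ≠ k ∧ j ≠ k'} => W j.1 ω')) := by
    intro ω ω'
    constructor
    · intro h
      exact ⟨congrFun h ⟨k, Ne.symm hk'⟩, funext fun j => congrFun h ⟨j.1, j.2.2⟩⟩
    · rintro ⟨h1, h2⟩
      funext j
      by_cases hj : j.1 = k
      · show W j.1 ω = W j.1 ω'
        rw [hj]; exact h1
      · exact congrFun h2 ⟨j.1, hj, j.2⟩
  -- database privacy, recoded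
  have hDBk : ent p (fun ω => (W k' ω, fun j : {j : Fin K // j ≠ k ∧ j ≠ k'} => W j.1 ω))
      + ent p (fun ω => ((fun m => Q k m ω), (fun m => A k m ω), F ω))
      - ent p (fun ω => (W k' ω, (fun j : {j : Fin K // j ≠ k ∧ j ≠ k'} => W j.1 ω),
          (fun m => Q k m ω), (fun m => A k m ω), F ω)) = 0 := by
    have hdbk := hDBPriv k
    simp only [mutInfo] at hdbk
    have eA : ent p (fun ω => fun j : {j : Fin K // j ≠ k} => W j.1 ω)
        = ent p (fun ω => (W k' ω, fun j : {j : Fin K // j ≠ k ∧ j ≠ k'} => W j.1 ω)) := by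
      refine ent_congr ?_
      intro ω ω'
      rw [ebar ω ω']
      simp only [Prod.mk.injEq]
    have eB : ent p (fun ω => ((fun j : {j : Fin K // j ≠ k} => W j.1 ω),
          (fun m => Q k m ω), (fun m => A k m ω), F ω))
        = ent p (fun ω => (W k' ω, (fun j : {j : Fin K // j ≠ k ∧ j ≠ k'} => W j.1 ω),
          (fun m => Q k m ω), (fun m => A k m ω), F ω)) := by
      refine ent_congr ?_
      intro ω ω'
      simp only [Prod.mk.injEq]
      constructor
      · rintro ⟨h1, h2⟩
        obtain ⟨a, b⟩ := (ebar ω ω').1 h1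
        exact ⟨a, b, h2⟩
      · rintro ⟨a, b, h2⟩
        exact ⟨(ebar ω ω').2 ⟨a, b⟩, h2⟩
    rw [eA, eB] at hdbk
    exact hdbk
  have hDBk' : ent p (fun ω => (W k ω, fun j : {j : Fin K // j ≠ k ∧ j ≠ k'} => W j.1 ω))
      + ent p (fun ω => ((fun m => Q k' m ω), (fun m => A k' m ω), F ω))
      - ent p (fun ω => (W k ω, (fun j : {j : Fin K // j ≠ k ∧ j ≠ k'} => W j.1 ω),
          (fun m => Q k' m ω), (fun m => A k' m ω), F ω)) = 0 := by
    have hdbk := hDBPriv k'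
    simp only [mutInfo] at hdbk
    have eA : ent p (fun ω => fun j : {j : Fin K // j ≠ k'} => W j.1 ω)
        = ent p (fun ω => (W k ω, fun j : {j : Fin K // j ≠ k ∧ j ≠ k'} => W j.1 ω)) := by
      refine ent_congr ?_
      intro ω ω'
      rw [ebar' ω ω']
      simp only [Prod.mk.injEq]
    have eB : ent p (fun ω => ((fun j : {j : Fin K // j ≠ k'} => W j.1 ω),
          (fun m => Q k' m ω), (fun m => A k' m ω), F ω))
        = ent p (fun ω => (W k ω, (fun j : {j : Fin K // j ≠ k ∧ j ≠ k'} => W j.1 ω),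
          (fun m => Q k' m ω), (fun m => A k' m ω), F ω)) := by
      refine ent_congr ?_
      intro ω ω'
      simp only [Prod.mk.injEq]
      constructor
      · rintro ⟨h1, h2⟩
        obtain ⟨a, b⟩ := (ebar' ω ω').1 h1
        exact ⟨a, b, h2⟩
      · rintro ⟨a, b, h2⟩
        exact ⟨(ebar' ω ω').2 ⟨a, b⟩, h2⟩
    rw [eA, eB] at hdbk
    exact hdbk
  -- user privacy, recoded
  have hswap3 : ent p (fun ω => (W k' ω,
        (fun j : {j : Fin K // j ≠ k ∧ j ≠ k'} => W j.1 ω), A k n ω, Q k n ω))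
      = ent p (fun ω => (W k' ω,
        (fun j : {j : Fin K // j ≠ k ∧ j ≠ k'} => W j.1 ω), A k' n ω, Q k' n ω)) :=
    ent_identDist (identDist_comp (hUserPriv n k k')
      (fun z => (z.2.2.1 k', (fun j : {j : Fin K // j ≠ k ∧ j ≠ k'} => z.2.2.1 j.1),
        z.2.1, z.1)))
  have hswap4 : ent p (fun ω => (W k ω, W k' ω,
        (fun j : {j : Fin K // j ≠ k ∧ j ≠ k'} => W j.1 ω), A k n ω, Q k n ω))
      = ent p (fun ω => (W k ω, W k' ω,
        (fun j : {j : Fin K // j ≠ k ∧ j ≠ k'} => W j.1 ω), A k' n ω, Q k' n ω)) :=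
    ent_identDist (identDist_comp (hUserPriv n k k')
      (fun z => (z.2.2.1 k, z.2.2.1 k',
        (fun j : {j : Fin K // j ≠ k ∧ j ≠ k'} => z.2.2.1 j.1), z.2.1, z.1)))
  -- determinism facts
  obtain ⟨gc, hgc⟩ := hCorrect k'
  have hkey := spir_key hp0 hp1 (W k) (W k')
    (fun ω => fun j : {j : Fin K // j ≠ k ∧ j ≠ k'} => W j.1 ω)
    (fun ω => (A k n ω, Q k n ω)) (fun ω => (A k' n ω, Q k' n ω))
    (fun ω => ((fun m => Q k m ω), (fun m => A k m ω), F ω))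
    (fun ω => ((fun m => Q k' m ω), (fun m => A k' m ω), F ω))
    ⟨fun z => (z.2.1 n, z.1 n), fun ω => rfl⟩
    ⟨fun z => (z.2.1 n, z.1 n), fun ω => rfl⟩
    ⟨fun z => gc z.2.1 z.2.2, fun ω => hgc ω⟩
    hswap3 hswap4 hDBk hDBk'
  -- recode the full message tuple
  have ewf1 : ent p (fun ω => fun j : Fin K => W j ω)
      = ent p (fun ω => (W k ω, W k' ω,
          fun j : {j : Fin K // j ≠ k ∧ j ≠ k'} => W j.1 ω)) := by
    refine ent_congr ?_
    intro ω ω'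
    rw [ewfiff ω ω']
    simp only [Prod.mk.injEq]
  have ewf2 : ent p (fun ω => ((fun j : Fin K => W j ω), A k n ω, Q k n ω))
      = ent p (fun ω => (W k ω, W k' ω,
          (fun j : {j : Fin K // j ≠ k ∧ j ≠ k'} => W j.1 ω), A k n ω, Q k n ω)) := by
    refine ent_congr ?_
    intro ω ω'
    simp only [Prod.mk.injEq]
    constructor
    · rintro ⟨h1, h2⟩
      obtain ⟨a, b, c⟩ := (ewfiff ω ω').1 h1
      exact ⟨a, b, c, h2⟩
    · rintro ⟨a, b, c, h2⟩
      exact ⟨(ewfiff ω ω').2 ⟨a, b, c⟩, h2⟩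
  have h3 : ent p (fun ω => fun j : Fin K => W j ω)
      + ent p (fun ω => (A k n ω, Q k n ω))
      - ent p (fun ω => ((fun j : Fin K => W j ω), A k n ω, Q k n ω)) ≤ 0 := by
    rw [ewf1, ewf2]
    exact hkey
  -- final assembly
  have M1 := mi_nonneg hp0 hp1 (fun ω => fun j : Fin K => W j ω) (Q k n)
  have eswapWQ : ent p (fun ω => ((fun j : Fin K => W j ω), Q k n ω))
      = ent p (fun ω => (Q k n ω, fun j : Fin K => W j ω)) := by
    refine ent_congr ?_
    intro ω ω'
    simp only [Prod.mk.injEq]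
    tauto
  have ereorder : ent p (fun ω => ((fun j : Fin K => W j ω), A k n ω, Q k n ω))
      = ent p (fun ω => (A k n ω, Q k n ω, fun j : Fin K => W j ω)) := by
    refine ent_congr ?_
    intro ω ω'
    simp only [Prod.mk.injEq]
    tauto
  obtain ⟨ga, hga⟩ := hA k n
  have e1 : ent p (fun ω => (A k n ω, Q k n ω, fun j : Fin K => W j ω))
      ≤ ent p (fun ω => (S ω, Q k n ω, fun j : Fin K => W j ω)) :=
    ent_le_ent_of_map hp0 (fun z => (ga z.2.1 z.2.2 z.1, z.2.1, z.2.2))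
      (fun ω => by rw [hga ω])
  have M2 := mi_nonneg hp0 hp1 S (fun ω => (Q k n ω, fun j : Fin K => W j ω))
  show ent p (fun ω => (A k n ω, Q k n ω)) - ent p (Q k n) ≤ ent p S
  linarith [h3, M1, eswapWQ, ereorder, e1, M2]
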